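/- Let A1 be an allotment that induces no negative loop, let s_j ∈ S, and let d ∈ D be a demand unit with A1(d) = s_j. Modify the cost matrix by replacing the row of d with arbitrary new values CM'(d, s) for all s ∈ S (all other rows unchanged), and let A2 denote the same assignment function considered under the modified cost matrix. Among all loops of A2 that pass through the vertex s_j, let C_min be one of minimum cost. Then: (a) if cost(C_min) ≥ 0 (or no loop of A2 passes through s_j), then A2 induces no negative loop; (b) if cost(C_min) < 0 and A3 is the allotment obtained from A2 by removing C_min, then A3 induces no negative loop. -/

import Mathlib

open Finset

/-- Cyclic successor on `Fin n`. -/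
def cnext {n : ℕ} (t : Fin n) : Fin n := ⟨(t.val + 1) % n, Nat.mod_lt _ t.pos⟩

section LBDD

variable {D S : Type*} [Fintype D] [DecidableEq D] [Fintype S] [DecidableEq S]

/-- Occupancy of a service center `s` under allotment `A`: the number of demand
units assigned to `s`. -/
def occ (A : D → S) (s : S) : ℕ := (Finset.univ.filter fun d => A d = s).card

/-- Total cost of an allotment: assignment costs plus accumulated per-allotment penalties. -/
def cost (CM : D → S → ℤ) (p : S → ℕ → ℤ) (A : D → S) : ℤ :=
  (∑ d, CM d (A d)) + ∑ s, ∑ j ∈ Finset.Icc 1 (occ A s), p s j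

/-- Weight of the penalty transfer edge from `si` to `sj` under allotment `A`. -/
def wpen (p : S → ℕ → ℤ) (A : D → S) (si sj : S) : ℤ :=
  p si (occ A si + 1) - p sj (occ A sj)

/-- A loop: a cyclic sequence of `m` edges; edge `t` is directed from `vtx t` to
`vtx (cnext t)`; if `dem t = some d` it is a transfer edge moving demand unit `d`,
and if `dem t = none` it is a penalty transfer edge. -/
structure Loop (S D : Type*) where
  m : ℕ
  vtx : Fin m → S
  dem : Fin m → Option D

/-- `L` is a loop of allotment `A`: at least two pairwise distinct service centers,
each transfer edge moves a demand unit currently assigned to its tail, the demand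
units are pairwise distinct, and there is at most one penalty transfer edge
(no penalty edge: type (i), a cycle of transfer edges; one penalty edge: type (ii),
a path of transfer edges closed by a penalty transfer edge). -/
def IsLoop (A : D → S) (L : Loop S D) : Prop :=
  2 ≤ L.m ∧ Function.Injective L.vtx ∧
  (∀ t d, L.dem t = some d → A d = L.vtx t) ∧
  (∀ t t' d, L.dem t = some d → L.dem t' = some d → t = t') ∧
  (∀ t t', L.dem t = none → L.dem t' = none → t = t')

/-- Weight of edge `t` of loop `L`. -/
def edgeWt (CM : D → S → ℤ) (p : S → ℕ → ℤ) (A : D → S) (L : Loop S D) (t : Fin L.m) : ℤ :=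
  match L.dem t with
  | some d => CM d (L.vtx (cnext t)) - CM d (L.vtx t)
  | none => wpen p A (L.vtx t) (L.vtx (cnext t))

/-- Cost of a loop: the sum of the weights of its edges. -/
def loopCost (CM : D → S → ℤ) (p : S → ℕ → ℤ) (A : D → S) (L : Loop S D) : ℤ :=
  ∑ t, edgeWt CM p A L t

/-- `A` induces a negative loop. -/
def InducesNegLoop (CM : D → S → ℤ) (p : S → ℕ → ℤ) (A : D → S) : Prop :=
  ∃ L : Loop S D, IsLoop A L ∧ loopCost CM p A L < 0

/-- Removing a loop from `A`: for each transfer edge, reassign its demand unit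
from the tail to the head of the edge. -/
noncomputable def removeLoop (A : D → S) (L : Loop S D) : D → S := fun x =>
  if h : ∃ t, L.dem t = some x then L.vtx (cnext (Classical.choose h)) else A x

end LBDD

section CnextLemmas

def cprev {n : ℕ} (t : Fin n) : Fin n := ⟨(t.val + (n-1)) % n, Nat.mod_lt _ t.pos⟩

lemma cnext_cprev {n : ℕ} (t : Fin n) : cnext (cprev t) = t := by
  have hn : 1 ≤ n := t.pos
  apply Fin.ext
  show ((t.val + (n-1)) % n + 1) % n = t.val
  rw [Nat.mod_add_mod]
  have : t.val + (n-1) + 1 = t.val + n := by omega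
  rw [this, Nat.add_mod_right, Nat.mod_eq_of_lt t.isLt]

lemma cprev_cnext {n : ℕ} (t : Fin n) : cprev (cnext t) = t := by
  have hn : 1 ≤ n := t.pos
  apply Fin.ext
  show ((t.val + 1) % n + (n-1)) % n = t.val
  rw [Nat.mod_add_mod]
  have : t.val + 1 + (n-1) = t.val + n := by omega
  rw [this, Nat.add_mod_right, Nat.mod_eq_of_lt t.isLt]

lemma cnext_inj {n : ℕ} : Function.Injective (cnext (n := n)) := by
  intro a b h
  rw [← cprev_cnext a, h, cprev_cnext]

lemma cnext_ne {n : ℕ} (hn : 2 ≤ n) (t : Fin n) : cnext t ≠ t := by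
  intro h
  have := congrArg Fin.val h
  simp only [cnext] at this
  rcases Nat.lt_or_ge (t.val + 1) n with h1 | h1
  · rw [Nat.mod_eq_of_lt h1] at this; omega
  · have h2 : t.val + 1 = n := by have := t.isLt; omega
    rw [h2, Nat.mod_self] at this; omega

lemma cnext_val_lt {n : ℕ} (t : Fin n) (h : t.val + 1 < n) : (cnext t).val = t.val + 1 :=
  Nat.mod_eq_of_lt h

lemma cnext_val_eq {n : ℕ} (t : Fin n) (h : t.val + 1 = n) : (cnext t).val = 0 := by
  simp [cnext, h]

end CnextLemmas

section Helpers
variable {D S : Type*} [Fintype D] [DecidableEq D] [Fintype S] [DecidableEq S]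

lemma p_mono {c : S → ℕ} {p : S → ℕ → ℤ}
    (hp0 : ∀ s j, j ≤ c s → p s j = 0)
    (hppos : ∀ s j, c s < j → 0 < p s j)
    (hpmono : ∀ s j, c s < j → p s j ≤ p s (j + 1)) (s : S) : Monotone (p s) := by
  apply monotone_nat_of_le_succ
  intro n
  by_cases h : n ≤ c s
  · rw [hp0 s n h]
    by_cases h' : n + 1 ≤ c s
    · rw [hp0 s (n+1) h']
    · exact (hppos s (n+1) (by omega)).le
  · exact hpmono s n (by omega)

lemma edgeWt_some {CM : D → S → ℤ} {p : S → ℕ → ℤ} {A : D → S} {L : Loop S D}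
    {t : Fin L.m} {d : D} (h : L.dem t = some d) :
    edgeWt CM p A L t = CM d (L.vtx (cnext t)) - CM d (L.vtx t) := by
  simp [edgeWt, h]

lemma edgeWt_none {CM : D → S → ℤ} {p : S → ℕ → ℤ} {A : D → S} {L : Loop S D}
    {t : Fin L.m} (h : L.dem t = none) :
    edgeWt CM p A L t = wpen p A (L.vtx t) (L.vtx (cnext t)) := by
  simp [edgeWt, h]

lemma isLoop_of {A : D → S} (L : Loop S D) (hm : 2 ≤ L.m)
    (hinj : Function.Injective L.vtx)
    (htr : ∀ t d, L.dem t = some d → A d = L.vtx t)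
    (hnone : ∀ t t', L.dem t = none → L.dem t' = none → t = t') : IsLoop A L := by
  refine ⟨hm, hinj, htr, ?_, hnone⟩
  intro t t' d h h'
  exact hinj ((htr t d h).symm.trans (htr t' d h'))

lemma occ_sum (A : D → S) : ∑ s, occ A s = Fintype.card D := by
  rw [← Finset.card_univ]
  exact (Finset.card_eq_sum_card_fiberwise (fun x _ => Finset.mem_univ (A x))).symm

/-- A loop not containing demand `d` has the same cost under `CM` and `CM'`. -/
lemma loopCost_congr {CM CM' : D → S → ℤ} {p : S → ℕ → ℤ} {A : D → S} {L : Loop S D}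
    {d : D} (hCM' : ∀ d' s, d' ≠ d → CM' d' s = CM d' s)
    (hnd : ∀ t, L.dem t ≠ some d) :
    loopCost CM' p A L = loopCost CM p A L := by
  unfold loopCost
  apply Finset.sum_congr rfl
  intro t _
  cases h : L.dem t with
  | none => rw [edgeWt_none h, edgeWt_none h]
  | some d' =>
    have hd' : d' ≠ d := by rintro rfl; exact hnd t h
    rw [edgeWt_some h, edgeWt_some h, hCM' d' _ hd', hCM' d' _ hd']

end Helpers

section Master
set_option linter.unusedSectionVars false
variable {D S : Type*} [Fintype D] [DecidableEq D] [Fintype S] [DecidableEq S]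

/-- Revert the demands moved by loop `L` back to their `A`-positions. -/
noncomputable def revert (A B : D → S) (L : Loop S D) : D → S :=
  fun x => if _ : ∃ t, L.dem t = some x then A x else B x

lemma card_tr (A : D → S) (L : Loop S D)
    (hdi : ∀ t t' x, L.dem t = some x → L.dem t' = some x → t = t')
    (f : D → S) (g : Fin L.m → S) (hfg : ∀ t x, L.dem t = some x → f x = g t) (s : S) :
    (Finset.univ.filter fun t => (L.dem t).isSome ∧ g t = s).card
      = (Finset.univ.filter fun x : D => (∃ t, L.dem t = some x) ∧ f x = s).card := by
  refine Finset.card_bij (fun t ht => (L.dem t).get (Finset.mem_filter.mp ht).2.1) ?_ ?_ ?_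
  · intro t ht
    obtain ⟨hs, hv⟩ := (Finset.mem_filter.mp ht).2
    refine Finset.mem_filter.mpr ⟨Finset.mem_univ _, ⟨t, (Option.some_get hs).symm⟩, ?_⟩
    rw [hfg t _ (Option.some_get hs).symm, hv]
  · intro a ha b hb h
    have hsa := (Finset.mem_filter.mp ha).2.1
    have hsb := (Finset.mem_filter.mp hb).2.1
    refine hdi a b _ (Option.some_get hsa).symm ?_
    rw [h]; exact (Option.some_get hsb).symm
  · intro x hx
    obtain ⟨-, ⟨t, ht⟩, hfx⟩ := Finset.mem_filter.mp hx
    have hs : (L.dem t).isSome := by rw [ht]; rfl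
    refine ⟨t, Finset.mem_filter.mpr ⟨Finset.mem_univ _, hs, ?_⟩, ?_⟩
    · rw [← hfg t x ht, hfx]
    · simp [ht]

lemma occ_revert_add (A B : D → S) (L : Loop S D) (s : S) :
    occ (revert A B L) s + (Finset.univ.filter fun x => (∃ t, L.dem t = some x) ∧ B x = s).card
      = occ B s + (Finset.univ.filter fun x => (∃ t, L.dem t = some x) ∧ A x = s).card := by
  classical
  have hdis : Disjoint (Finset.univ.filter fun x : D => (∃ t, L.dem t = some x) ∧ A x = s)
      (Finset.univ.filter fun x : D => ¬(∃ t, L.dem t = some x) ∧ B x = s) := by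
    rw [Finset.disjoint_left]
    intro x hx hy
    exact (Finset.mem_filter.mp hy).2.1 (Finset.mem_filter.mp hx).2.1
  have hdis' : Disjoint (Finset.univ.filter fun x : D => (∃ t, L.dem t = some x) ∧ B x = s)
      (Finset.univ.filter fun x : D => ¬(∃ t, L.dem t = some x) ∧ B x = s) := by
    rw [Finset.disjoint_left]
    intro x hx hy
    exact (Finset.mem_filter.mp hy).2.1 (Finset.mem_filter.mp hx).2.1
  have h1 : (Finset.univ.filter fun x => revert A B L x = s)
      = (Finset.univ.filter fun x : D => (∃ t, L.dem t = some x) ∧ A x = s)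
        ∪ (Finset.univ.filter fun x : D => ¬(∃ t, L.dem t = some x) ∧ B x = s) := by
    ext x
    by_cases h : ∃ t, L.dem t = some x <;> simp only [Finset.mem_filter, Finset.mem_union, Finset.mem_univ, true_and] <;> simp [revert, h] <;> tauto
  have h2 : (Finset.univ.filter fun x => B x = s)
      = (Finset.univ.filter fun x : D => (∃ t, L.dem t = some x) ∧ B x = s)
        ∪ (Finset.univ.filter fun x : D => ¬(∃ t, L.dem t = some x) ∧ B x = s) := by
    ext x
    by_cases h : ∃ t, L.dem t = some x <;> simp [h] <;> tauto
  unfold occ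
  rw [h1, h2, Finset.card_union_of_disjoint hdis, Finset.card_union_of_disjoint hdis']
  omega

/-- The key occupancy identity, via transfer to edge-side counting. -/
lemma occ_revert_key (A B : D → S) (L : Loop S D) (hL : IsLoop A L)
    (hBA : ∀ t x, L.dem t = some x → B x = L.vtx (cnext t)) (s : S) :
    occ (revert A B L) s + (Finset.univ.filter fun t => (L.dem t).isSome ∧ L.vtx (cnext t) = s).card
      = occ B s + (Finset.univ.filter fun t => (L.dem t).isSome ∧ L.vtx t = s).card := by
  have hA := card_tr A L hL.2.2.2.1 A L.vtx (fun t x h => (hL.2.2.1 t x h)) s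
  have hB := card_tr A L hL.2.2.2.1 B (fun t => L.vtx (cnext t)) (fun t x h => hBA t x h) s
  rw [hA, hB]
  exact occ_revert_add A B L s

lemma occ_revert_i (A B : D → S) (L : Loop S D) (hL : IsLoop A L)
    (hBA : ∀ t x, L.dem t = some x → B x = L.vtx (cnext t))
    (hall : ∀ t, (L.dem t).isSome) (s : S) :
    occ (revert A B L) s = occ B s := by
  have key := occ_revert_key A B L hL hBA s
  have hc : (Finset.univ.filter fun t => (L.dem t).isSome ∧ L.vtx (cnext t) = s).card
      = (Finset.univ.filter fun t => (L.dem t).isSome ∧ L.vtx t = s).card := by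
    refine Finset.card_bij (fun t _ => cnext t) ?_ ?_ ?_
    · intro t ht
      exact Finset.mem_filter.mpr ⟨Finset.mem_univ _, hall _, (Finset.mem_filter.mp ht).2.2⟩
    · intro a _ b _ h; exact cnext_inj h
    · intro t' ht'
      refine ⟨cprev t', Finset.mem_filter.mpr ⟨Finset.mem_univ _, hall _, ?_⟩, cnext_cprev t'⟩
      rw [cnext_cprev]; exact (Finset.mem_filter.mp ht').2.2
  omega

lemma occ_revert_ii (A B : D → S) (L : Loop S D) (hL : IsLoop A L)
    (hBA : ∀ t x, L.dem t = some x → B x = L.vtx (cnext t))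
    (t0 : Fin L.m) (ht0 : L.dem t0 = none) :
    (occ (revert A B L) (L.vtx t0) + 1 = occ B (L.vtx t0)) ∧
    (occ (revert A B L) (L.vtx (cnext t0)) = occ B (L.vtx (cnext t0)) + 1) ∧
    (∀ s, s ≠ L.vtx t0 → s ≠ L.vtx (cnext t0) → occ (revert A B L) s = occ B s) := by
  have hm := hL.1
  have hinj := hL.2.1
  have hsome : ∀ t, t ≠ t0 → (L.dem t).isSome := by
    intro t ht
    rw [Option.isSome_iff_ne_none]
    intro hn
    exact ht (hL.2.2.2.2 t t0 hn ht0)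
  have hct0 : cnext t0 ≠ t0 := cnext_ne hm t0
  have hcp0 : cprev t0 ≠ t0 := by
    intro h
    have h2 := congrArg cnext h
    rw [cnext_cprev] at h2
    exact hct0 h2.symm
  refine ⟨?_, ?_, ?_⟩
  · have key := occ_revert_key A B L hL hBA (L.vtx t0)
    have hA : (Finset.univ.filter fun t => (L.dem t).isSome ∧ L.vtx t = L.vtx t0) = ∅ := by
      rw [Finset.filter_eq_empty_iff]
      rintro t - ⟨hs, hv⟩
      have ht : t = t0 := hinj hv
      rw [ht, ht0] at hs; simp at hs
    have hB : (Finset.univ.filter fun t => (L.dem t).isSome ∧ L.vtx (cnext t) = L.vtx t0)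
        = {cprev t0} := by
      ext t
      simp only [Finset.mem_filter, Finset.mem_univ, true_and, Finset.mem_singleton]
      constructor
      · rintro ⟨hs, hv⟩
        have h : cnext t = t0 := hinj hv
        rw [← h, cprev_cnext]
      · rintro rfl
        exact ⟨hsome _ hcp0, by rw [cnext_cprev]⟩
    rw [hA, hB] at key
    simp only [Finset.card_singleton, Finset.card_empty] at key
    omega
  · have key := occ_revert_key A B L hL hBA (L.vtx (cnext t0))
    have hA : (Finset.univ.filter fun t => (L.dem t).isSome ∧ L.vtx t = L.vtx (cnext t0))
        = {cnext t0} := by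
      ext t
      simp only [Finset.mem_filter, Finset.mem_univ, true_and, Finset.mem_singleton]
      constructor
      · rintro ⟨hs, hv⟩
        exact hinj hv
      · rintro rfl
        exact ⟨hsome _ hct0, rfl⟩
    have hB : (Finset.univ.filter fun t => (L.dem t).isSome ∧ L.vtx (cnext t) = L.vtx (cnext t0))
        = ∅ := by
      rw [Finset.filter_eq_empty_iff]
      rintro t - ⟨hs, hv⟩
      have ht : t = t0 := cnext_inj (hinj hv)
      rw [ht, ht0] at hs; simp at hs
    rw [hA, hB] at key
    simp only [Finset.card_singleton, Finset.card_empty] at key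
    omega
  · intro s hsu hsv
    have key := occ_revert_key A B L hL hBA s
    have hc : (Finset.univ.filter fun t => (L.dem t).isSome ∧ L.vtx (cnext t) = s).card
        = (Finset.univ.filter fun t => (L.dem t).isSome ∧ L.vtx t = s).card := by
      refine Finset.card_bij (fun t _ => cnext t) ?_ ?_ ?_
      · intro t ht
        have hv := (Finset.mem_filter.mp ht).2.2
        refine Finset.mem_filter.mpr ⟨Finset.mem_univ _, hsome _ ?_, hv⟩
        intro h; rw [h] at hv; exact hsu hv.symm
      · intro a _ b _ h; exact cnext_inj h
      · intro t' ht'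
        obtain ⟨-, hs', hv'⟩ := Finset.mem_filter.mp ht'
        refine ⟨cprev t', Finset.mem_filter.mpr ⟨Finset.mem_univ _, hsome _ ?_, ?_⟩, cnext_cprev t'⟩
        · intro h
          have : cnext (cprev t') = cnext t0 := by rw [h]
          rw [cnext_cprev] at this
          rw [this] at hv'
          exact hsv hv'.symm
        · rw [cnext_cprev]; exact hv'
    omega

lemma transfer_sum (CM : D → S → ℤ) (p : S → ℕ → ℤ) (A B : D → S) (L : Loop S D)
    (hL : IsLoop A L)
    (hBA : ∀ t x, L.dem t = some x → B x = L.vtx (cnext t)) :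
    ∑ x, CM x (B x) = ∑ x, CM x (revert A B L x)
      + ∑ t ∈ (Finset.univ.filter fun t => (L.dem t).isSome), edgeWt CM p A L t := by
  classical
  have hsum : ∑ x, (CM x (B x) - CM x (revert A B L x))
      = ∑ t ∈ (Finset.univ.filter fun t => (L.dem t).isSome), edgeWt CM p A L t := by
    rw [← Finset.sum_filter_add_sum_filter_not Finset.univ (fun x => ∃ t, L.dem t = some x)]
    have hz : ∑ x ∈ Finset.univ.filter fun x => ¬(∃ t, L.dem t = some x),
        (CM x (B x) - CM x (revert A B L x)) = 0 := by
      apply Finset.sum_eq_zero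
      intro x hx
      have h := (Finset.mem_filter.mp hx).2
      simp [revert, h]
    rw [hz, add_zero]
    refine (Finset.sum_bij (fun t ht => (L.dem t).get (Finset.mem_filter.mp ht).2) ?_ ?_ ?_ ?_).symm
    · intro t ht
      have hs := (Finset.mem_filter.mp ht).2
      exact Finset.mem_filter.mpr ⟨Finset.mem_univ _, ⟨t, (Option.some_get hs).symm⟩⟩
    · intro a ha b hb h
      have hsa := (Finset.mem_filter.mp ha).2
      have hsb := (Finset.mem_filter.mp hb).2
      refine hL.2.2.2.1 a b _ (Option.some_get hsa).symm ?_
      rw [h]; exact (Option.some_get hsb).symm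
    · intro x hx
      obtain ⟨t, ht⟩ := (Finset.mem_filter.mp hx).2
      have hs : (L.dem t).isSome := by rw [ht]; rfl
      exact ⟨t, Finset.mem_filter.mpr ⟨Finset.mem_univ _, hs⟩, by simp [ht]⟩
    · intro t ht
      have hs := (Finset.mem_filter.mp ht).2
      have hdem : L.dem t = some ((L.dem t).get hs) := (Option.some_get hs).symm
      rw [edgeWt_some hdem]
      have h1 : B ((L.dem t).get hs) = L.vtx (cnext t) := hBA t _ hdem
      have h2 : revert A B L ((L.dem t).get hs) = A ((L.dem t).get hs) := by
        unfold revert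
        rw [dif_pos ⟨t, hdem⟩]
      rw [h1, h2, hL.2.2.1 t _ hdem]
  rw [Finset.sum_sub_distrib] at hsum
  linarith

end Master

section Master2
set_option linter.unusedSectionVars false
variable {D S : Type*} [Fintype D] [DecidableEq D] [Fintype S] [DecidableEq S]

lemma master_i (CM : D → S → ℤ) (p : S → ℕ → ℤ) (A B : D → S) (L : Loop S D)
    (hL : IsLoop A L)
    (hBA : ∀ t x, L.dem t = some x → B x = L.vtx (cnext t))
    (hall : ∀ t, (L.dem t).isSome) :
    cost CM p B = cost CM p (revert A B L) + loopCost CM p A L := by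
  have hT : (Finset.univ.filter fun t => (L.dem t).isSome) = Finset.univ := by
    apply Finset.filter_true_of_mem
    intro t _; exact hall t
  have htr := transfer_sum CM p A B L hL hBA
  rw [hT] at htr
  have hpen : ∀ s, occ B s = occ (revert A B L) s :=
    fun s => (occ_revert_i A B L hL hBA hall s).symm
  unfold cost loopCost
  rw [htr]
  have : ∀ s : S, ∑ j ∈ Finset.Icc 1 (occ B s), p s j
      = ∑ j ∈ Finset.Icc 1 (occ (revert A B L) s), p s j := by
    intro s; rw [hpen s]
  rw [Finset.sum_congr rfl (fun s _ => this s)]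
  ring

lemma master_ii (CM : D → S → ℤ) (p : S → ℕ → ℤ) (A B : D → S) (L : Loop S D)
    (hL : IsLoop A L)
    (hBA : ∀ t x, L.dem t = some x → B x = L.vtx (cnext t))
    (t0 : Fin L.m) (ht0 : L.dem t0 = none) :
    cost CM p B = cost CM p (revert A B L) + (loopCost CM p A L - edgeWt CM p A L t0)
      + (p (L.vtx t0) (occ B (L.vtx t0)) - p (L.vtx (cnext t0)) (occ B (L.vtx (cnext t0)) + 1)) := by
  have hm := hL.1
  have hinj := hL.2.1
  have huv : L.vtx t0 ≠ L.vtx (cnext t0) := by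
    intro h
    exact cnext_ne hm t0 (hinj h.symm)
  have hT : (Finset.univ.filter fun t => (L.dem t).isSome) = Finset.univ.erase t0 := by
    ext t
    simp only [Finset.mem_filter, Finset.mem_univ, true_and, Finset.mem_erase, and_true]
    rw [Option.isSome_iff_ne_none]
    constructor
    · intro h hE; rw [hE, ht0] at h; exact h rfl
    · intro h hn; exact h (hL.2.2.2.2 t t0 hn ht0)
  have htr := transfer_sum CM p A B L hL hBA
  rw [hT] at htr
  have hsplit : ∑ t ∈ Finset.univ.erase t0, edgeWt CM p A L t
      = loopCost CM p A L - edgeWt CM p A L t0 := by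
    have := Finset.sum_erase_add Finset.univ (edgeWt CM p A L) (Finset.mem_univ t0)
    unfold loopCost
    linarith
  have hocc := occ_revert_ii A B L hL hBA t0 ht0
  -- penalty sums
  have hpen : ∑ s, ∑ j ∈ Finset.Icc 1 (occ B s), p s j
      = ∑ s, ∑ j ∈ Finset.Icc 1 (occ (revert A B L) s), p s j
        + (p (L.vtx t0) (occ B (L.vtx t0))
           - p (L.vtx (cnext t0)) (occ B (L.vtx (cnext t0)) + 1)) := by
    set u := L.vtx t0
    set v := L.vtx (cnext t0)
    have hdiff : ∑ s, (∑ j ∈ Finset.Icc 1 (occ B s), p s j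
        - ∑ j ∈ Finset.Icc 1 (occ (revert A B L) s), p s j)
        = ∑ s ∈ ({u, v} : Finset S), (∑ j ∈ Finset.Icc 1 (occ B s), p s j
          - ∑ j ∈ Finset.Icc 1 (occ (revert A B L) s), p s j) := by
      refine (Finset.sum_subset (Finset.subset_univ _) ?_).symm
      intro s _ hs
      simp only [Finset.mem_insert, Finset.mem_singleton, not_or] at hs
      rw [hocc.2.2 s hs.1 hs.2]
      ring
    have hu : ∑ j ∈ Finset.Icc 1 (occ B u), p u j
        - ∑ j ∈ Finset.Icc 1 (occ (revert A B L) u), p u j = p u (occ B u) := by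
      have h1 : occ B u = occ (revert A B L) u + 1 := hocc.1.symm
      rw [h1, Finset.sum_Icc_succ_top (by omega : 1 ≤ occ (revert A B L) u + 1)]
      ring
    have hv : ∑ j ∈ Finset.Icc 1 (occ B v), p v j
        - ∑ j ∈ Finset.Icc 1 (occ (revert A B L) v), p v j = -p v (occ B v + 1) := by
      have h1 : occ (revert A B L) v = occ B v + 1 := hocc.2.1
      rw [h1, Finset.sum_Icc_succ_top (by omega : 1 ≤ occ B v + 1)]
      ring
    rw [Finset.sum_pair huv, hu, hv] at hdiff
    rw [Finset.sum_sub_distrib] at hdiff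
    linarith
  unfold cost
  rw [htr, hsplit, hpen]
  ring

lemma cost_removeLoop (CM : D → S → ℤ) (p : S → ℕ → ℤ) (A : D → S) (L : Loop S D)
    (hL : IsLoop A L) :
    cost CM p (removeLoop A L) = cost CM p A + loopCost CM p A L := by
  classical
  set B := removeLoop A L with hB
  have hBA : ∀ t x, L.dem t = some x → B x = L.vtx (cnext t) := by
    intro t x h
    have hex : ∃ t, L.dem t = some x := ⟨t, h⟩
    show (if h' : ∃ t, L.dem t = some x then L.vtx (cnext (Classical.choose h')) else A x)
      = L.vtx (cnext t)
    rw [dif_pos hex]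
    have hspec := Classical.choose_spec hex
    rw [hL.2.2.2.1 _ _ _ hspec h]
  have hrev : revert A B L = A := by
    funext x
    unfold revert
    by_cases h : ∃ t, L.dem t = some x
    · rw [dif_pos h]
    · rw [dif_neg h]
      show (if h' : ∃ t, L.dem t = some x then _ else A x) = A x
      rw [dif_neg h]
  by_cases hn : ∃ t0, L.dem t0 = none
  · obtain ⟨t0, ht0⟩ := hn
    have h2 := occ_revert_ii A B L hL hBA t0 ht0
    rw [hrev] at h2
    have hmas := master_ii CM p A B L hL hBA t0 ht0
    rw [hrev] at hmas
    have he : edgeWt CM p A L t0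
        = p (L.vtx t0) (occ A (L.vtx t0) + 1) - p (L.vtx (cnext t0)) (occ A (L.vtx (cnext t0))) := by
      rw [edgeWt_none ht0]; rfl
    have h3 : occ B (L.vtx t0) = occ A (L.vtx t0) + 1 := h2.1.symm
    have h4 : occ B (L.vtx (cnext t0)) + 1 = occ A (L.vtx (cnext t0)) := h2.2.1.symm
    rw [hmas, h3, h4, he]
    ring
  · have hall : ∀ t, (L.dem t).isSome := by
      intro t
      rw [Option.isSome_iff_ne_none]
      exact fun h => hn ⟨t, h⟩
    have hmas := master_i CM p A B L hL hBA hall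
    rw [hrev] at hmas
    exact hmas

lemma kdt_step (CM : D → S → ℤ) (p : S → ℕ → ℤ) (A B : D → S) (L : Loop S D)
    (hmono : ∀ s, Monotone (p s))
    (hL : IsLoop A L)
    (hBA : ∀ t x, L.dem t = some x → B x = L.vtx (cnext t))
    (hpen : ∀ t0, L.dem t0 = none → occ A (L.vtx t0) < occ B (L.vtx t0)
      ∧ occ B (L.vtx (cnext t0)) < occ A (L.vtx (cnext t0))) :
    cost CM p (revert A B L) + loopCost CM p A L ≤ cost CM p B := by
  by_cases hn : ∃ t0, L.dem t0 = none
  · obtain ⟨t0, ht0⟩ := hn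
    have hmas := master_ii CM p A B L hL hBA t0 ht0
    have he : edgeWt CM p A L t0
        = p (L.vtx t0) (occ A (L.vtx t0) + 1) - p (L.vtx (cnext t0)) (occ A (L.vtx (cnext t0))) := by
      rw [edgeWt_none ht0]; rfl
    obtain ⟨hg, hl⟩ := hpen t0 ht0
    have h1 : p (L.vtx t0) (occ A (L.vtx t0) + 1) ≤ p (L.vtx t0) (occ B (L.vtx t0)) :=
      hmono _ (by omega)
    have h2 : p (L.vtx (cnext t0)) (occ B (L.vtx (cnext t0)) + 1)
        ≤ p (L.vtx (cnext t0)) (occ A (L.vtx (cnext t0))) :=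
      hmono _ (by omega)
    rw [hmas, he]
    linarith
  · have hall : ∀ t, (L.dem t).isSome := by
      intro t
      rw [Option.isSome_iff_ne_none]
      exact fun h => hn ⟨t, h⟩
    rw [master_i CM p A B L hL hBA hall]

end Master2

section Walk
set_option linter.unusedSectionVars false
variable {D S : Type*} [Fintype D] [DecidableEq D] [Fintype S] [DecidableEq S]

/-- A loop of `A` compatible with the difference between `A` and `B`. -/
def GoodLoop (A B : D → S) (L : Loop S D) : Prop :=
  IsLoop A L ∧
  (∀ t x, L.dem t = some x → B x = L.vtx (cnext t) ∧ A x ≠ B x) ∧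
  (∀ t0, L.dem t0 = none → occ A (L.vtx t0) < occ B (L.vtx t0)
    ∧ occ B (L.vtx (cnext t0)) < occ A (L.vtx (cnext t0)))

lemma mod_succ_ne {m : ℕ} (hm : 2 ≤ m) {j : ℕ} (hj : j < m) : (j + 1) % m ≠ j := by
  rcases Nat.lt_or_ge (j + 1) m with h | h
  · rw [Nat.mod_eq_of_lt h]; omega
  · have hje : j + 1 = m := by omega
    rw [hje, Nat.mod_self]; omega

lemma build_cycle (A B : D → S) (m : ℕ) (hm : 2 ≤ m) (w : ℕ → S) (e : ℕ → D)
    (hinjw : ∀ i j, i < m → j < m → w i = w j → i = j)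
    (he : ∀ j, j < m → A (e j) = w j ∧ B (e j) = w ((j + 1) % m)) :
    ∃ L : Loop S D, GoodLoop A B L := by
  refine ⟨⟨m, fun t => w t.val, fun t => some (e t.val)⟩, ?_, ?_, ?_⟩
  · apply isLoop_of _ hm
    · intro a b h
      exact Fin.ext (hinjw _ _ a.isLt b.isLt h)
    · intro t x h
      obtain rfl : e t.val = x := Option.some.inj h
      exact (he t.val t.isLt).1
    · intro t t' h
      exact absurd h (by simp)
  · intro t x h
    obtain rfl : e t.val = x := Option.some.inj h
    constructor
    · exact (he t.val t.isLt).2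
    · rw [(he t.val t.isLt).1, (he t.val t.isLt).2]
      intro hw
      exact mod_succ_ne hm t.isLt (hinjw _ _ (Nat.mod_lt _ (by omega)) t.isLt hw.symm)
  · intro t0 h
    exact absurd h (by simp)

lemma build_path (A B : D → S) (k : ℕ) (hk : 1 ≤ k) (v : ℕ → S) (dd : ℕ → D)
    (hinj : ∀ i j, i ≤ k → j ≤ k → v i = v j → i = j)
    (he : ∀ j, j < k → A (dd j) = v j ∧ B (dd j) = v (j + 1))
    (hgain : occ A (v k) < occ B (v k))
    (hlose : occ B (v 0) < occ A (v 0)) :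
    ∃ L : Loop S D, GoodLoop A B L := by
  refine ⟨⟨k + 1, fun t => v t.val,
      fun t => if t.val = k then none else some (dd t.val)⟩, ?_, ?_, ?_⟩
  · apply isLoop_of _ (by show 2 ≤ k + 1; omega)
    · intro a b h
      have ha : a.val < k + 1 := a.isLt
      have hb : b.val < k + 1 := b.isLt
      exact Fin.ext (hinj _ _ (by omega) (by omega) h)
    · intro t x h
      change (if t.val = k then none else some (dd t.val)) = some x at h
      have ht' : t.val < k + 1 := t.isLt
      by_cases ht : t.val = k
      · rw [if_pos ht] at h; exact absurd h (by simp)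
      · rw [if_neg ht] at h
        obtain rfl : dd t.val = x := Option.some.inj h
        exact (he t.val (by omega)).1
    · intro t t' h h'
      change (if t.val = k then none else some (dd t.val)) = none at h
      change (if t'.val = k then none else some (dd t'.val)) = none at h'
      by_cases ht : t.val = k
      · by_cases ht' : t'.val = k
        · exact Fin.ext (ht.trans ht'.symm)
        · rw [if_neg ht'] at h'; exact absurd h' (by simp)
      · rw [if_neg ht] at h; exact absurd h (by simp)
  · intro t x h
    change (if t.val = k then none else some (dd t.val)) = some x at h
    have ht' : t.val < k + 1 := t.isLt
    by_cases ht : t.val = k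
    · rw [if_pos ht] at h; exact absurd h (by simp)
    · rw [if_neg ht] at h
      obtain rfl : dd t.val = x := Option.some.inj h
      have htk : t.val < k := by omega
      have hmod : (t.val + 1) % (k + 1) = t.val + 1 := Nat.mod_eq_of_lt (by omega)
      constructor
      · show B (dd t.val) = v ((t.val + 1) % (k+1))
        rw [hmod]; exact (he t.val htk).2
      · rw [(he t.val htk).1, (he t.val htk).2]
        intro hw
        have := hinj _ _ (by omega) (by omega) hw
        omega
  · intro t0 h
    change (if t0.val = k then none else some (dd t0.val)) = none at h
    by_cases ht : t0.val = k
    · constructor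
      · show occ A (v t0.val) < occ B (v t0.val)
        rw [ht]; exact hgain
      · show occ B (v ((t0.val + 1) % (k+1))) < occ A (v ((t0.val + 1) % (k+1)))
        rw [ht, Nat.mod_self]; exact hlose
    · rw [if_neg ht] at h; exact absurd h (by simp)

lemma exists_loop_aux (A B : D → S) :
    ∀ n (k : ℕ) (v : ℕ → S) (dd : ℕ → D),
      Fintype.card S < k + 1 + n →
      (∀ i j, i ≤ k → j ≤ k → v i = v j → i = j) →
      (∀ j, j < k → A (dd j) = v j ∧ B (dd j) = v (j + 1)) →
      (occ B (v 0) < occ A (v 0) ∨ ∀ s, occ A s = occ B s) →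
      (k = 0 → ∃ x, A x = v 0 ∧ B x ≠ v 0) →
      ∃ L : Loop S D, GoodLoop A B L := by
  intro n
  induction n with
  | zero =>
    intro k v dd hcard hinj _ _ _
    exfalso
    have hle : Fintype.card (Fin (k + 1)) ≤ Fintype.card S :=
      Fintype.card_le_of_injective (fun i => v i.val)
        (fun a b h => Fin.ext (hinj _ _ (by omega) (by omega) h))
    rw [Fintype.card_fin] at hle
    omega
  | succ n ih =>
    intro k v dd hcard hinj harc hstart h4
    by_cases hstuck : ∃ x, A x = v k ∧ B x ≠ v k
    · obtain ⟨x', hAx', hBx'⟩ := hstuck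
      by_cases hmem : ∃ i, i ≤ k ∧ v i = B x'
      · obtain ⟨i, hik, hvi⟩ := hmem
        have hik' : i < k := by
          rcases Nat.lt_or_ge i k with h | h
          · exact h
          · exfalso
            have : i = k := by omega
            rw [this] at hvi
            exact hBx' hvi.symm
        apply build_cycle A B (k + 1 - i) (by omega) (fun j => v (i + j))
          (fun j => if j = k - i then x' else dd (i + j))
        · intro a b ha hb h
          have := hinj (i + a) (i + b) (by omega) (by omega) h
          omega
        · intro j hj
          by_cases hjk : j = k - i
          · rw [if_pos hjk]
            have h1 : i + j = k := by omega
            have h2 : (j + 1) % (k + 1 - i) = 0 := by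
              have : j + 1 = k + 1 - i := by omega
              rw [this, Nat.mod_self]
            constructor
            · show A x' = v (i + j)
              rw [h1]; exact hAx'
            · show B x' = v (i + (j + 1) % (k + 1 - i))
              rw [h2]; exact hvi.symm
          · rw [if_neg hjk]
            have hjlt : j < k - i := by omega
            have h2 : (j + 1) % (k + 1 - i) = j + 1 := Nat.mod_eq_of_lt (by omega)
            constructor
            · exact (harc (i + j) (by omega)).1
            · show B (dd (i + j)) = v (i + (j + 1) % (k + 1 - i))
              rw [h2, ← Nat.add_assoc]
              exact (harc (i + j) (by omega)).2
      · push_neg at hmem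
        apply ih (k + 1) (fun j => if j = k + 1 then B x' else v j)
          (fun j => if j = k then x' else dd j)
        · omega
        · intro a b ha hb h
          by_cases ha' : a = k + 1
          · by_cases hb' : b = k + 1
            · omega
            · rw [if_pos ha', if_neg hb'] at h
              exact absurd h.symm (hmem b (by omega))
          · by_cases hb' : b = k + 1
            · rw [if_neg ha', if_pos hb'] at h
              exact absurd h (hmem a (by omega))
            · rw [if_neg ha', if_neg hb'] at h
              exact hinj a b (by omega) (by omega) h
        · intro j hj
          by_cases hjk : j = k
          · rw [if_pos hjk]
            constructor
            · show A x' = if j = k + 1 then B x' else v j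
              rw [if_neg (by omega), hjk]
              exact hAx'
            · show B x' = if j + 1 = k + 1 then B x' else v (j + 1)
              rw [if_pos (by omega)]
          · rw [if_neg hjk]
            constructor
            · show A (dd j) = if j = k + 1 then B x' else v j
              rw [if_neg (by omega)]
              exact (harc j (by omega)).1
            · show B (dd j) = if j + 1 = k + 1 then B x' else v (j + 1)
              rw [if_neg (by omega)]
              exact (harc j (by omega)).2
        · show (occ B (if 0 = k + 1 then B x' else v 0) < occ A (if 0 = k + 1 then B x' else v 0)) ∨ _
          rw [if_neg (by omega)]
          exact hstart
        · omega
    · push_neg at hstuck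
      have hk : k ≠ 0 := by
        intro hk0
        obtain ⟨x, hx1, hx2⟩ := h4 hk0
        apply hx2
        rw [hk0] at hstuck
        exact hstuck x hx1
      have hd := harc (k - 1) (by omega)
      have hBd : B (dd (k - 1)) = v k := by
        have : k - 1 + 1 = k := by omega
        rw [← this]; exact hd.2
      have hAd : A (dd (k - 1)) ≠ v k := by
        rw [hd.1]
        intro h
        have := hinj (k - 1) k (by omega) (by omega) h
        omega
      have hgain : occ A (v k) < occ B (v k) := by
        have hsub : insert (dd (k - 1)) (Finset.univ.filter fun x => A x = v k)
            ⊆ Finset.univ.filter fun x => B x = v k := by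
          intro y hy
          rcases Finset.mem_insert.mp hy with h | h
          · subst h; exact Finset.mem_filter.mpr ⟨Finset.mem_univ _, hBd⟩
          · exact Finset.mem_filter.mpr ⟨Finset.mem_univ _, hstuck y (Finset.mem_filter.mp h).2⟩
        have hcard2 := Finset.card_le_card hsub
        rw [Finset.card_insert_of_notMem (by
          intro h
          exact hAd (Finset.mem_filter.mp h).2)] at hcard2
        unfold occ
        omega
      have hlose : occ B (v 0) < occ A (v 0) := by
        rcases hstart with h | h
        · exact h
        · exfalso; rw [h (v k)] at hgain; omega
      exact build_path A B k (by omega) v dd hinj harc hgain hlose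

lemma exists_loop (A B : D → S) (hx : ∃ x, A x ≠ B x) :
    ∃ L : Loop S D, GoodLoop A B L := by
  obtain ⟨x0, hx0⟩ := hx
  by_cases hloser : ∃ s, occ B s < occ A s
  · obtain ⟨s0, hs0⟩ := hloser
    have h4 : ∃ x, A x = s0 ∧ B x ≠ s0 := by
      by_contra h
      push_neg at h
      have hsub : (Finset.univ.filter fun x => A x = s0) ⊆ Finset.univ.filter fun x => B x = s0 := by
        intro y hy
        exact Finset.mem_filter.mpr ⟨Finset.mem_univ _, h y (Finset.mem_filter.mp hy).2⟩
      have := Finset.card_le_card hsub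
      unfold occ at hs0
      omega
    exact exists_loop_aux A B (Fintype.card S) 0 (fun _ => s0) (fun _ => x0)
      (by omega) (by omega) (by omega) (Or.inl hs0) (fun _ => h4)
  · push_neg at hloser
    have heq : ∀ s, occ A s = occ B s := by
      have hsum : ∑ s, occ A s = ∑ s, occ B s := by rw [occ_sum, occ_sum]
      intro s
      exact (Finset.sum_eq_sum_iff_of_le (fun i _ => hloser i)).mp hsum s (Finset.mem_univ s)
    exact exists_loop_aux A B (Fintype.card S) 0 (fun _ => A x0) (fun _ => x0)
      (by omega) (by omega) (by omega) (Or.inr heq) (fun _ => ⟨x0, rfl, hx0.symm⟩)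

end Walk

section MainAux
set_option linter.unusedSectionVars false
variable {D S : Type*} [Fintype D] [DecidableEq D] [Fintype S] [DecidableEq S]

lemma kdt (CM CM' : D → S → ℤ) (p : S → ℕ → ℤ) (hmono : ∀ s, Monotone (p s))
    (A1 : D → S) (d : D) (sj : S) (hd : A1 d = sj)
    (hA1 : ¬ InducesNegLoop CM p A1)
    (hCM' : ∀ d' s, d' ≠ d → CM' d' s = CM d' s)
    (γ : ℤ)
    (hγle : ∀ L : Loop S D, IsLoop A1 L → (∃ t, L.vtx t = sj) → γ ≤ loopCost CM' p A1 L) :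
    ∀ N (B : D → S), (Finset.univ.filter fun x => A1 x ≠ B x).card ≤ N →
      (A1 d = B d → cost CM' p A1 ≤ cost CM' p B) ∧
      (A1 d ≠ B d → cost CM' p A1 + γ ≤ cost CM' p B) := by
  intro N
  induction N with
  | zero =>
    intro B hB
    have hAB : ∀ x, A1 x = B x := by
      intro x
      by_contra h
      have hx : x ∈ Finset.univ.filter (fun x => A1 x ≠ B x) :=
        Finset.mem_filter.mpr ⟨Finset.mem_univ _, h⟩
      have hemp := Finset.card_eq_zero.mp (Nat.le_zero.mp hB)
      rw [hemp] at hx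
      exact absurd hx (Finset.notMem_empty x)
    have hc : cost CM' p A1 = cost CM' p B := by rw [show A1 = B from funext hAB]
    exact ⟨fun _ => hc.le, fun h => absurd (hAB d) h⟩
  | succ N ih =>
    intro B hB
    by_cases hAB : ∀ x, A1 x = B x
    · have hc : cost CM' p A1 = cost CM' p B := by rw [show A1 = B from funext hAB]
      exact ⟨fun _ => hc.le, fun h => absurd (hAB d) h⟩
    · push_neg at hAB
      obtain ⟨L, hL, hcompat, hpen⟩ := exists_loop A1 B hAB
      have hBA : ∀ t x, L.dem t = some x → B x = L.vtx (cnext t) :=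
        fun t x h => (hcompat t x h).1
      have hstep : cost CM' p (revert A1 B L) + loopCost CM' p A1 L ≤ cost CM' p B :=
        kdt_step CM' p A1 B L hmono hL hBA hpen
      have hBrx : ∀ x, revert A1 B L x = A1 x ∨ revert A1 B L x = B x := by
        intro x
        unfold revert
        by_cases h : ∃ t, L.dem t = some x
        · left; rw [dif_pos h]
        · right; rw [dif_neg h]
      have hsub : (Finset.univ.filter fun x => A1 x ≠ revert A1 B L x)
          ⊆ (Finset.univ.filter fun x => A1 x ≠ B x) := by
        intro x hx
        have hx' := (Finset.mem_filter.mp hx).2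
        refine Finset.mem_filter.mpr ⟨Finset.mem_univ _, ?_⟩
        rcases hBrx x with h | h
        · exact absurd h.symm hx'
        · rw [← h]; exact hx'
      have hdem : ∃ t x, L.dem t = some x := by
        have hm2 := hL.1
        have h01 : (⟨0, by omega⟩ : Fin L.m) ≠ ⟨1, by omega⟩ := by
          intro h; have := congrArg Fin.val h; simp at this
        cases h0 : L.dem ⟨0, by omega⟩ with
        | some x => exact ⟨_, x, h0⟩
        | none =>
          cases h1 : L.dem ⟨1, by omega⟩ with
          | some x => exact ⟨_, x, h1⟩
          | none => exact absurd (hL.2.2.2.2 _ _ h0 h1) h01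
      obtain ⟨t1, x1, ht1⟩ := hdem
      have hx1 : A1 x1 ≠ B x1 := (hcompat t1 x1 ht1).2
      have hBrx1 : revert A1 B L x1 = A1 x1 := by
        unfold revert; rw [dif_pos ⟨t1, ht1⟩]
      have hmem1 : x1 ∈ (Finset.univ.filter fun x => A1 x ≠ B x) :=
        Finset.mem_filter.mpr ⟨Finset.mem_univ _, hx1⟩
      have hmem2 : x1 ∉ (Finset.univ.filter fun x => A1 x ≠ revert A1 B L x) := by
        intro h
        exact (Finset.mem_filter.mp h).2 hBrx1.symm
      have hcard : (Finset.univ.filter fun x => A1 x ≠ revert A1 B L x).card ≤ N := by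
        have := Finset.card_lt_card
          ((Finset.ssubset_iff_of_subset hsub).mpr ⟨x1, hmem1, hmem2⟩)
        omega
      have ihBr := ih (revert A1 B L) hcard
      by_cases hdB : A1 d = B d
      · have hdL : ∀ t, L.dem t ≠ some d := by
          intro t ht
          exact (hcompat t d ht).2 hdB
        have hlc : loopCost CM' p A1 L = loopCost CM p A1 L := loopCost_congr hCM' hdL
        have hge : 0 ≤ loopCost CM p A1 L := by
          by_contra h
          push_neg at h
          exact hA1 ⟨L, hL, h⟩
        have hBrd : revert A1 B L d = B d := by
          unfold revert
          rw [dif_neg]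
          rintro ⟨t, ht⟩
          exact hdL t ht
        refine ⟨fun _ => ?_, fun h => absurd hdB h⟩
        have h1 := ihBr.1 (by rw [hBrd, ← hdB])
        linarith
      · refine ⟨fun h => absurd h hdB, fun _ => ?_⟩
        by_cases hdL : ∃ t, L.dem t = some d
        · obtain ⟨t, ht⟩ := hdL
          have hsj : L.vtx t = sj := by
            rw [← hd]; exact (hL.2.2.1 t d ht).symm
          have hγL : γ ≤ loopCost CM' p A1 L := hγle L hL ⟨t, hsj⟩
          have hBrd : revert A1 B L d = A1 d := by
            unfold revert; rw [dif_pos ⟨t, ht⟩]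
          have h1 := ihBr.1 hBrd.symm
          linarith
        · have hlc : loopCost CM' p A1 L = loopCost CM p A1 L :=
            loopCost_congr hCM' (fun t ht => hdL ⟨t, ht⟩)
          have hge : 0 ≤ loopCost CM p A1 L := by
            by_contra h
            push_neg at h
            exact hA1 ⟨L, hL, h⟩
          have hBrd : revert A1 B L d = B d := by
            unfold revert; rw [dif_neg hdL]
          have h2 := ihBr.2 (by rw [hBrd]; exact hdB)
          linarith

end MainAux



/-- let `A1` induce no negative loop, let `d` be a demand unit with
`A1 d = sj`, and modify the cost matrix only on the row of `d` (obtaining `CM'`;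
`A2` is the same assignment function viewed under `CM'`, so its loops are
exactly the loops of `A1`, evaluated with costs from `CM'`).
(a) If every loop of `A2` passing through `sj` has nonnegative cost, then `A2`
induces no negative loop.
(b) If `Cmin` is a loop of `A2` of minimum cost among the loops passing through
`sj` and its cost is negative, then removing `Cmin` yields an allotment inducing
no negative loop. -/
theorem restore_optimality_after_row_change
    (D S : Type) [Fintype D] [DecidableEq D] [Fintype S] [DecidableEq S]
    (CM CM' : D → S → ℤ) (c : S → ℕ) (p : S → ℕ → ℤ)
    (hp0 : ∀ s j, j ≤ c s → p s j = 0)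
    (hppos : ∀ s j, c s < j → 0 < p s j)
    (hpmono : ∀ s j, c s < j → p s j ≤ p s (j + 1))
    (A1 : D → S) (d : D) (sj : S) (hd : A1 d = sj)
    (hA1 : ¬ InducesNegLoop CM p A1)
    (hCM' : ∀ d' s, d' ≠ d → CM' d' s = CM d' s) :
    ((∀ L : Loop S D, IsLoop A1 L → (∃ t, L.vtx t = sj) →
        0 ≤ loopCost CM' p A1 L) → ¬ InducesNegLoop CM' p A1) ∧
    (∀ Cmin : Loop S D, IsLoop A1 Cmin → (∃ t, Cmin.vtx t = sj) →
        (∀ L : Loop S D, IsLoop A1 L → (∃ t, L.vtx t = sj) →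
          loopCost CM' p A1 Cmin ≤ loopCost CM' p A1 L) →
        loopCost CM' p A1 Cmin < 0 →
        ¬ InducesNegLoop CM' p (removeLoop A1 Cmin)) := by
  constructor
  · intro h
    rintro ⟨L, hL, hneg⟩
    by_cases hsj : ∃ t, L.vtx t = sj
    · exact absurd hneg (not_lt.mpr (h L hL hsj))
    · push_neg at hsj
      have hdL : ∀ t, L.dem t ≠ some d := by
        intro t ht
        exact hsj t (by rw [← hd]; exact (hL.2.2.1 t d ht).symm)
      rw [loopCost_congr hCM' hdL] at hneg
      exact hA1 ⟨L, hL, hneg⟩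
  · intro Cmin hC hCsj hCmin hγ
    have hmono : ∀ s, Monotone (p s) := p_mono hp0 hppos hpmono
    have hkdt := kdt CM CM' p hmono A1 d sj hd hA1 hCM' (loopCost CM' p A1 Cmin) hCmin
    have hA3 : cost CM' p (removeLoop A1 Cmin)
        = cost CM' p A1 + loopCost CM' p A1 Cmin := cost_removeLoop CM' p A1 Cmin hC
    have hopt : ∀ B : D → S, cost CM' p (removeLoop A1 Cmin) ≤ cost CM' p B := by
      intro B
      have h := hkdt (Finset.univ.filter fun x => A1 x ≠ B x).card B le_rfl
      by_cases hdB : A1 d = B d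
      · have := h.1 hdB
        linarith
      · have := h.2 hdB
        linarith
    rintro ⟨L, hL3, hneg⟩
    have h1 := cost_removeLoop CM' p (removeLoop A1 Cmin) L hL3
    have h2 := hopt (removeLoop (removeLoop A1 Cmin) L)
    linarith
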